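/- Let Ω = F × F where F = {1, 2, 3, 4}, and let G be the group of all permutations of Ω of the form (i, j) ↦ (σ(i), τ_i(j)), where σ and each τ_i (i ∈ F) are permutations of F (i.e., G is the wreath product S₄ ≀ S₄ in its imprimitive action on 16 points, with the second coordinate as blocks indexed by the first). Then for every subset Δ of Ω, the setwise stabilizer of Δ in G is not nilpotent. -/

import Mathlib

open Pointwise

section StmtAux

open Equiv

private lemma aux_not_nilpotent {H : Type*} [Group H] {a b : H}
    (ha : a * a = 1) (hb : b * b * b = 1) (hr : b * a * b * a = 1) (hb1 : b ≠ 1) :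
    ¬ Group.IsNilpotent H := by
  have hinv : a⁻¹ = a := (eq_inv_of_mul_eq_one_left ha).symm
  have hbbinv : (b * b)⁻¹ = b := by rw [eq_inv_of_mul_eq_one_left hb, inv_inv]
  have key : (b * b) * a * (b * b)⁻¹ * a⁻¹ = b := by
    rw [hbbinv, hinv, show b * b * a * b * a = b * (b * a * b * a) from by group, hr, mul_one]
  intro hnil
  obtain ⟨n, hn⟩ := nilpotent_iff_lowerCentralSeries.mp hnil
  have mem : ∀ n, b ∈ Subgroup.lowerCentralSeries (⊤ : Subgroup H) n := by
    intro n
    induction n with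
    | zero => exact Subgroup.mem_top b
    | succ n ih =>
      rw [mem_lowerCentralSeries_succ_iff]
      exact Subgroup.subset_closure ⟨b * b, mul_mem ih ih, a, Subgroup.mem_top a, key⟩
  exact hb1 (Subgroup.mem_bot.mp (hn ▸ mem n))

noncomputable def mapPermCompl (S T : Finset (Fin 4)) (h : S.card = T.card) :
    {x : Fin 4 // ¬ x ∈ S} ≃ {x : Fin 4 // ¬ x ∈ T} :=
  (Equiv.subtypeEquivRight (fun x => Finset.mem_compl.symm)).trans
    ((Finset.equivOfCardEq (by
        have h4 : S.card ≤ 4 := by simpa using Finset.card_le_univ S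
        have := Finset.card_compl S
        have := Finset.card_compl T
        simp only [Fintype.card_fin] at *
        omega : Sᶜ.card = Tᶜ.card)).trans
      (Equiv.subtypeEquivRight (fun x => Finset.mem_compl)))

noncomputable def mapPerm (S T : Finset (Fin 4)) (h : S.card = T.card) : Equiv.Perm (Fin 4) :=
  (Equiv.sumCompl (· ∈ S)).symm.trans
    ((Equiv.sumCongr (Finset.equivOfCardEq h) (mapPermCompl S T h)).trans
      (Equiv.sumCompl (· ∈ T)))

lemma mapPerm_spec (S T : Finset (Fin 4)) (h : S.card = T.card) (x : Fin 4) :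
    x ∈ S ↔ mapPerm S T h x ∈ T := by
  unfold mapPerm
  by_cases hx : x ∈ S
  · simp only [Equiv.trans_apply]
    rw [Equiv.sumCompl_symm_apply_of_pos (p := (· ∈ S)) hx]
    simp [hx, Finset.coe_mem]
  · simp only [Equiv.trans_apply]
    rw [Equiv.sumCompl_symm_apply_of_neg (p := (· ∈ S)) hx]
    simp only [Equiv.sumCongr_apply, Sum.map_inr, Equiv.sumCompl_apply_inr]
    exact iff_of_false hx (mapPermCompl S T h ⟨x, hx⟩).prop

private lemma main_helper (G : Subgroup (Equiv.Perm (Fin 4 × Fin 4))) (Δ : Set (Fin 4 × Fin 4))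
    (A B : Equiv.Perm (Fin 4 × Fin 4)) (hAG : A ∈ G) (hBG : B ∈ G)
    (hAfix : ∀ p, p ∈ Δ ↔ A p ∈ Δ) (hBfix : ∀ p, p ∈ Δ ↔ B p ∈ Δ)
    (hAA : A * A = 1) (hBBB : B * B * B = 1) (hBABA : B * A * B * A = 1) (hB1 : B ≠ 1) :
    ¬ Group.IsNilpotent (MulAction.stabilizer G Δ) := by
  have stab : ∀ (C : Equiv.Perm (Fin 4 × Fin 4)) (hC : C ∈ G), (∀ p, p ∈ Δ ↔ C p ∈ Δ) →
      (⟨C, hC⟩ : G) ∈ MulAction.stabilizer G Δ := by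
    intro C hC hfix
    rw [MulAction.mem_stabilizer_iff]
    ext p
    rw [Set.mem_smul_set_iff_inv_smul_mem]
    have h1 : ((⟨C, hC⟩ : G)⁻¹ • p) = C⁻¹ p := rfl
    rw [h1]
    simpa using (hfix (C⁻¹ p))
  set a : MulAction.stabilizer G Δ := ⟨⟨A, hAG⟩, stab A hAG hAfix⟩ with ha_def
  set b : MulAction.stabilizer G Δ := ⟨⟨B, hBG⟩, stab B hBG hBfix⟩ with hb_def
  refine aux_not_nilpotent (a := a) (b := b) ?_ ?_ ?_ ?_
  · exact Subtype.ext (Subtype.ext hAA)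
  · exact Subtype.ext (Subtype.ext hBBB)
  · exact Subtype.ext (Subtype.ext hBABA)
  · intro h
    exact hB1 (congrArg (fun x : MulAction.stabilizer G Δ => ((x : G) : Equiv.Perm (Fin 4 × Fin 4))) h)


end StmtAux

/-- Example 3.4: in the imprimitive wreath product `S₄ ≀ S₄` acting on `F × F` with
`F = {1,2,3,4}` (permutations of the form `(i, j) ↦ (σ i, τ_i j)`), no subset of `F × F`
has a nilpotent setwise stabilizer. -/
theorem stmt_17 (G : Subgroup (Equiv.Perm (Fin 4 × Fin 4)))
    (hG : ∀ g : Equiv.Perm (Fin 4 × Fin 4), g ∈ G ↔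
      ∃ (σ : Equiv.Perm (Fin 4)) (τ : Fin 4 → Equiv.Perm (Fin 4)),
        ∀ p : Fin 4 × Fin 4, g p = (σ p.1, τ p.1 p.2)) :
    ∀ Δ : Set (Fin 4 × Fin 4), ¬ Group.IsNilpotent (MulAction.stabilizer G Δ) := by
  intro Δ
  classical
  set s : Fin 4 → Finset (Fin 4) := fun i => Finset.univ.filter (fun j => (i, j) ∈ Δ) with hs
  have mem_s : ∀ i j, (i, j) ∈ Δ ↔ j ∈ s i := by intro i j; simp [hs]
  by_cases hall : ∀ i, (s i).card = 2
  · set u := mapPerm (s 0) (s 1) (by rw [hall 0, hall 1]) with hu_def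
    set v := mapPerm (s 1) (s 2) (by rw [hall 1, hall 2]) with hv_def
    have hu : ∀ x, x ∈ s 0 ↔ u x ∈ s 1 := mapPerm_spec _ _ _
    have hv : ∀ x, x ∈ s 1 ↔ v x ∈ s 2 := mapPerm_spec _ _ _
    set σa : Equiv.Perm (Fin 4) := Equiv.swap 0 1 with hσa
    set σb : Equiv.Perm (Fin 4) := Equiv.swap 0 2 * Equiv.swap 0 1 with hσb
    set τa : Fin 4 → Equiv.Perm (Fin 4) :=
      fun k => if k = 0 then u else if k = 1 then u⁻¹ else 1 with hτa
    set τb : Fin 4 → Equiv.Perm (Fin 4) :=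
      fun k => if k = 0 then u else if k = 1 then v else if k = 2 then (v * u)⁻¹ else 1 with hτb
    have sa0 : σa 0 = 1 := by decide
    have sa1 : σa 1 = 0 := by decide
    have sa2 : σa 2 = 2 := by decide
    have sa3 : σa 3 = 3 := by decide
    have sb0 : σb 0 = 1 := by decide
    have sb1 : σb 1 = 2 := by decide
    have sb2 : σb 2 = 0 := by decide
    have sb3 : σb 3 = 3 := by decide
    have ta0 : τa 0 = u := by simp [hτa]
    have ta1 : τa 1 = u⁻¹ := by simp [hτa]
    have ta2 : τa 2 = 1 := by simp [hτa]
    have ta3 : τa 3 = 1 := by simp [hτa]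
    have tb0 : τb 0 = u := by simp [hτb]
    have tb1 : τb 1 = v := by simp [hτb]
    have tb2 : τb 2 = (v * u)⁻¹ := by simp [hτb]
    have tb3 : τb 3 = 1 := by simp [hτb]
    set A : Equiv.Perm (Fin 4 × Fin 4) := Equiv.prodShear σa τa with hA
    set B : Equiv.Perm (Fin 4 × Fin 4) := Equiv.prodShear σb τb with hB
    have hA_apply : ∀ p : Fin 4 × Fin 4, A p = (σa p.1, τa p.1 p.2) := fun p => rfl
    have hB_apply : ∀ p : Fin 4 × Fin 4, B p = (σb p.1, τb p.1 p.2) := fun p => rfl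
    apply main_helper G Δ A B ((hG A).mpr ⟨σa, τa, hA_apply⟩) ((hG B).mpr ⟨σb, τb, hB_apply⟩)
    · -- A fixes Δ
      rintro ⟨k, j⟩
      rw [hA_apply]
      have h0 : ∀ j : Fin 4, ((0 : Fin 4), j) ∈ Δ ↔ (σa 0, τa 0 j) ∈ Δ := by
        intro j; rw [sa0, ta0]
        exact (mem_s 0 j).trans ((hu j).trans (mem_s 1 (u j)).symm)
      have h1 : ∀ j : Fin 4, ((1 : Fin 4), j) ∈ Δ ↔ (σa 1, τa 1 j) ∈ Δ := by
        intro j; rw [sa1, ta1]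
        refine (mem_s 1 j).trans (Iff.trans ?_ (mem_s 0 (u⁻¹ j)).symm)
        have := (hu (u⁻¹ j)).symm
        simpa using this
      have h2 : ∀ j : Fin 4, ((2 : Fin 4), j) ∈ Δ ↔ (σa 2, τa 2 j) ∈ Δ := by
        intro j; rw [sa2, ta2]; rfl
      have h3 : ∀ j : Fin 4, ((3 : Fin 4), j) ∈ Δ ↔ (σa 3, τa 3 j) ∈ Δ := by
        intro j; rw [sa3, ta3]; rfl
      fin_cases k
      · exact h0 j
      · exact h1 j
      · exact h2 j
      · exact h3 j
    · -- B fixes Δ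
      rintro ⟨k, j⟩
      rw [hB_apply]
      have hvu : ∀ x, v (u ((v * u)⁻¹ x)) = x := by
        intro x; simp [mul_inv_rev, Equiv.Perm.mul_apply]
      have h0 : ∀ j : Fin 4, ((0 : Fin 4), j) ∈ Δ ↔ (σb 0, τb 0 j) ∈ Δ := by
        intro j; rw [sb0, tb0]
        exact (mem_s 0 j).trans ((hu j).trans (mem_s 1 (u j)).symm)
      have h1 : ∀ j : Fin 4, ((1 : Fin 4), j) ∈ Δ ↔ (σb 1, τb 1 j) ∈ Δ := by
        intro j; rw [sb1, tb1]
        exact (mem_s 1 j).trans ((hv j).trans (mem_s 2 (v j)).symm)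
      have h2 : ∀ j : Fin 4, ((2 : Fin 4), j) ∈ Δ ↔ (σb 2, τb 2 j) ∈ Δ := by
        intro j; rw [sb2, tb2]
        refine (mem_s 2 j).trans (Iff.trans ?_ (mem_s 0 ((v * u)⁻¹ j)).symm)
        have := ((hu ((v * u)⁻¹ j)).trans (hv (u ((v * u)⁻¹ j)))).symm
        rw [hvu j] at this
        exact this
      have h3 : ∀ j : Fin 4, ((3 : Fin 4), j) ∈ Δ ↔ (σb 3, τb 3 j) ∈ Δ := by
        intro j; rw [sb3, tb3]; rfl
      fin_cases k
      · exact h0 j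
      · exact h1 j
      · exact h2 j
      · exact h3 j
    · -- A * A = 1
      apply Equiv.ext
      rintro ⟨k, j⟩
      show (σa (σa k), τa (σa k) (τa k j)) = (k, j)
      have h0 : ∀ j : Fin 4, (σa (σa 0), τa (σa 0) (τa 0 j)) = ((0 : Fin 4), j) := by
        intro j; rw [sa0, sa1, ta0, ta1]; simp
      have h1 : ∀ j : Fin 4, (σa (σa 1), τa (σa 1) (τa 1 j)) = ((1 : Fin 4), j) := by
        intro j; rw [sa1, sa0, ta1, ta0]; simp
      have h2 : ∀ j : Fin 4, (σa (σa 2), τa (σa 2) (τa 2 j)) = ((2 : Fin 4), j) := by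
        intro j; rw [sa2, sa2, ta2]; simp
      have h3 : ∀ j : Fin 4, (σa (σa 3), τa (σa 3) (τa 3 j)) = ((3 : Fin 4), j) := by
        intro j; rw [sa3, sa3, ta3]; simp
      fin_cases k
      · exact h0 j
      · exact h1 j
      · exact h2 j
      · exact h3 j
    · -- B * B * B = 1
      apply Equiv.ext
      rintro ⟨k, j⟩
      show (σb (σb (σb k)), τb (σb (σb k)) (τb (σb k) (τb k j))) = (k, j)
      have h0 : ∀ j : Fin 4, (σb (σb (σb 0)), τb (σb (σb 0)) (τb (σb 0) (τb 0 j))) = ((0 : Fin 4), j) := by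
        intro j; rw [sb0, sb1, sb2, tb0, tb1, tb2]
        simp [mul_inv_rev, Equiv.Perm.mul_apply]
      have h1 : ∀ j : Fin 4, (σb (σb (σb 1)), τb (σb (σb 1)) (τb (σb 1) (τb 1 j))) = ((1 : Fin 4), j) := by
        intro j; rw [sb1, sb2, sb0, tb1, tb2, tb0]
        simp [mul_inv_rev, Equiv.Perm.mul_apply]
      have h2 : ∀ j : Fin 4, (σb (σb (σb 2)), τb (σb (σb 2)) (τb (σb 2) (τb 2 j))) = ((2 : Fin 4), j) := by
        intro j; rw [sb2, sb0, sb1, tb2, tb0, tb1]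
        simp [mul_inv_rev, Equiv.Perm.mul_apply]
      have h3 : ∀ j : Fin 4, (σb (σb (σb 3)), τb (σb (σb 3)) (τb (σb 3) (τb 3 j))) = ((3 : Fin 4), j) := by
        intro j; rw [sb3, sb3, sb3, tb3]; simp
      fin_cases k
      · exact h0 j
      · exact h1 j
      · exact h2 j
      · exact h3 j
    · -- B * A * B * A = 1
      apply Equiv.ext
      rintro ⟨k, j⟩
      show (σb (σa (σb (σa k))), τb (σa (σb (σa k))) (τa (σb (σa k)) (τb (σa k) (τa k j)))) = (k, j)
      have h0 : ∀ j : Fin 4,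
          (σb (σa (σb (σa 0))), τb (σa (σb (σa 0))) (τa (σb (σa 0)) (τb (σa 0) (τa 0 j)))) = ((0 : Fin 4), j) := by
        intro j; rw [sa0, sb1, sa2, sb2, ta0, tb1, ta2, tb2]
        simp [mul_inv_rev, Equiv.Perm.mul_apply]
      have h1 : ∀ j : Fin 4,
          (σb (σa (σb (σa 1))), τb (σa (σb (σa 1))) (τa (σb (σa 1)) (τb (σa 1) (τa 1 j)))) = ((1 : Fin 4), j) := by
        intro j
        simp only [sa1, sb0, ta1, tb0]
        simp
      have h2 : ∀ j : Fin 4,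
          (σb (σa (σb (σa 2))), τb (σa (σb (σa 2))) (τa (σb (σa 2)) (τb (σa 2) (τa 2 j)))) = ((2 : Fin 4), j) := by
        intro j; rw [sa2, sb2, sa0, sb1, ta2, tb2, ta0, tb1]
        simp [mul_inv_rev, Equiv.Perm.mul_apply]
      have h3 : ∀ j : Fin 4,
          (σb (σa (σb (σa 3))), τb (σa (σb (σa 3))) (τa (σb (σa 3)) (τb (σa 3) (τa 3 j)))) = ((3 : Fin 4), j) := by
        intro j; rw [sa3, sb3, sa3, sb3, ta3, tb3]; simp
      fin_cases k
      · exact h0 j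
      · exact h1 j
      · exact h2 j
      · exact h3 j
    · -- B ≠ 1
      intro h
      have h2 := congrArg (fun f : Equiv.Perm (Fin 4 × Fin 4) => (f (0, 0)).1) h
      simp only [hB_apply, Equiv.Perm.one_apply] at h2
      rw [sb0] at h2
      exact absurd h2 (by decide)
  ·
    push_neg at hall
    obtain ⟨i, hi⟩ := hall
    obtain ⟨t, ht3, hmem⟩ :
        ∃ t : Finset (Fin 4), t.card = 3 ∧
          ((∀ j ∈ t, (i, j) ∈ Δ) ∨ (∀ j ∈ t, (i, j) ∉ Δ)) := by
      rcases le_or_gt 3 ((s i).card) with h | h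
      · obtain ⟨t, hts, ht⟩ := Finset.exists_subset_card_eq h
        exact ⟨t, ht, Or.inl fun j hj => (mem_s i j).mpr (hts hj)⟩
      · have hc : ((s i)ᶜ).card = 4 - (s i).card := by
          simp [Finset.card_compl]
        have h3 : 3 ≤ ((s i)ᶜ).card := by omega
        obtain ⟨t, hts, ht⟩ := Finset.exists_subset_card_eq h3
        refine ⟨t, ht, Or.inr fun j hj => fun hΔ => ?_⟩
        exact (Finset.mem_compl.mp (hts hj)) ((mem_s i j).mp hΔ)
    set e : Fin 3 ≃ {x : Fin 4 // x ∈ t} := (t.equivFin.trans (finCongr ht3)).symm with he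
    set a0 : Equiv.Perm (Fin 3) := Equiv.swap 0 1 with ha0
    set b0 : Equiv.Perm (Fin 3) := Equiv.swap 0 2 * Equiv.swap 0 1 with hb0
    have r1 : a0 * a0 = 1 := Equiv.ext (by decide)
    have r2 : b0 * b0 * b0 = 1 := Equiv.ext (by decide)
    have r3 : b0 * a0 * b0 * a0 = 1 := Equiv.ext (by decide)
    set a1 : Equiv.Perm (Fin 4) := a0.extendDomain e with ha1
    set b1 : Equiv.Perm (Fin 4) := b0.extendDomain e with hb1
    have E1 : a1 * a1 = 1 := by
      rw [ha1, Equiv.Perm.extendDomain_mul, r1, Equiv.Perm.extendDomain_one]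
    have E2 : b1 * b1 * b1 = 1 := by
      rw [hb1, Equiv.Perm.extendDomain_mul, Equiv.Perm.extendDomain_mul, r2,
        Equiv.Perm.extendDomain_one]
    have E3 : b1 * a1 * b1 * a1 = 1 := by
      rw [hb1, ha1, Equiv.Perm.extendDomain_mul, Equiv.Perm.extendDomain_mul,
        Equiv.Perm.extendDomain_mul, r3, Equiv.Perm.extendDomain_one]
    have pA : ∀ x, a1 (a1 x) = x := fun x => by
      rw [← Equiv.Perm.mul_apply, E1]; rfl
    have pB : ∀ x, b1 (b1 (b1 x)) = x := fun x => by
      rw [← Equiv.Perm.mul_apply, ← Equiv.Perm.mul_apply, E2]; rfl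
    have pBA : ∀ x, b1 (a1 (b1 (a1 x))) = x := fun x => by
      rw [← Equiv.Perm.mul_apply, ← Equiv.Perm.mul_apply, ← Equiv.Perm.mul_apply, E3]; rfl
    have ext_mem : ∀ (g : Equiv.Perm (Fin 3)) (x : Fin 4), x ∈ t → g.extendDomain e x ∈ t := by
      intro g x hx
      rw [Equiv.Perm.extendDomain_apply_subtype g e hx]
      exact (e (g (e.symm ⟨x, hx⟩))).prop
    have ext_id : ∀ (g : Equiv.Perm (Fin 3)) (x : Fin 4), x ∉ t → g.extendDomain e x = x :=
      fun g x hx => Equiv.Perm.extendDomain_apply_not_subtype g e hx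
    set τA : Fin 4 → Equiv.Perm (Fin 4) := fun k => if k = i then a1 else 1 with hτA
    set τB : Fin 4 → Equiv.Perm (Fin 4) := fun k => if k = i then b1 else 1 with hτB
    set A : Equiv.Perm (Fin 4 × Fin 4) := Equiv.prodShear 1 τA with hA
    set B : Equiv.Perm (Fin 4 × Fin 4) := Equiv.prodShear 1 τB with hB
    have hA_apply : ∀ p : Fin 4 × Fin 4, A p = (p.1, τA p.1 p.2) := fun p => rfl
    have hB_apply : ∀ p : Fin 4 × Fin 4, B p = (p.1, τB p.1 p.2) := fun p => rfl
    apply main_helper G Δ A B ((hG A).mpr ⟨1, τA, hA_apply⟩) ((hG B).mpr ⟨1, τB, hB_apply⟩)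
    · rintro ⟨k, j⟩
      rw [hA_apply]
      by_cases hk : k = i
      · subst hk
        rw [show τA k = a1 from if_pos rfl]
        by_cases hj : j ∈ t
        · rcases hmem with hin | hout
          · exact iff_of_true (hin j hj) (hin _ (ext_mem a0 j hj))
          · exact iff_of_false (fun h => hout j hj h) (fun h => hout _ (ext_mem a0 j hj) h)
        · rw [ext_id a0 j hj]
      · rw [show τA k = 1 from if_neg hk]; exact Iff.rfl
    · rintro ⟨k, j⟩
      rw [hB_apply]
      by_cases hk : k = i
      · subst hk
        rw [show τB k = b1 from if_pos rfl]
        by_cases hj : j ∈ t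
        · rcases hmem with hin | hout
          · exact iff_of_true (hin j hj) (hin _ (ext_mem b0 j hj))
          · exact iff_of_false (fun h => hout j hj h) (fun h => hout _ (ext_mem b0 j hj) h)
        · rw [ext_id b0 j hj]
      · rw [show τB k = 1 from if_neg hk]; exact Iff.rfl
    · apply Equiv.ext
      rintro ⟨k, j⟩
      show (k, τA k (τA k j)) = (k, j)
      by_cases hk : k = i
      · rw [show τA k = a1 from if_pos hk, pA j]
      · rw [show τA k = 1 from if_neg hk]; rfl
    · apply Equiv.ext
      rintro ⟨k, j⟩
      show (k, τB k (τB k (τB k j))) = (k, j)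
      by_cases hk : k = i
      · rw [show τB k = b1 from if_pos hk, pB j]
      · rw [show τB k = 1 from if_neg hk]; rfl
    · apply Equiv.ext
      rintro ⟨k, j⟩
      show (k, τB k (τA k (τB k (τA k j)))) = (k, j)
      by_cases hk : k = i
      · rw [show τA k = a1 from if_pos hk, show τB k = b1 from if_pos hk, pBA j]
      · rw [show τA k = 1 from if_neg hk, show τB k = 1 from if_neg hk]; rfl
    · intro hBone
      have h2 := congrArg (fun f : Equiv.Perm (Fin 4 × Fin 4) => (f (i, ↑(e 0))).2) hBone
      simp only [hB_apply, Equiv.Perm.one_apply] at h2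
      rw [show τB i = b1 from if_pos rfl] at h2
      rw [hb1, Equiv.Perm.extendDomain_apply_image] at h2
      have h3 : b0 0 = 0 := e.injective (Subtype.coe_injective h2)
      exact absurd h3 (by decide)
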